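/- For every dominant weight λ ∈ P_+, in Frac(ℤ[P]) the Weyl orbit sum E_λ = Σ_{φ ∈ Wλ} e^φ satisfies E_λ = Σ_{μ ∈ P_+} M^{inv}_{λ,μ} · χ_μ, where M^{inv}_{λ,μ} = (|Wλ| / |W|) · Σ_{x,w ∈ W} det w · δ(xλ + wρ, μ + ρ), δ(κ, κ') = 1 if κ = κ' and 0 otherwise, and only finitely many M^{inv}_{λ,μ} are nonzero. (Explicit inverse of the character-to-orbit decomposition.) -/

import Mathlib

/- Setting: a reduced crystallographic root system, with a fixed base of simple roots,
in a finite-dimensional real inner product space `V`.  The group ring `ℤ[P]` is realized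
inside the group ring `AddMonoidAlgebra ℤ V` of the ambient (additive) group `V`, with
`e^μ = AddMonoidAlgebra.single μ 1`. -/

open scoped InnerProductSpace Classical
open Finset

noncomputable section

variable (V : Type) [NormedAddCommGroup V] [InnerProductSpace ℝ V] [FiniteDimensional ℝ V]

/-- Any real vector space has `TwoUniqueSums` (being a `ℚ`-vector space). -/
noncomputable instance : TwoUniqueSums V :=
  letI : Module ℚ V := Module.compHom V (algebraMap ℚ ℝ)
  inferInstance

/-- The group ring `ℤ[V]` is an integral domain. -/
instance : IsDomain (AddMonoidAlgebra ℤ V) := NoZeroDivisors.to_isDomain _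

/-- A reduced crystallographic root system in the finite-dimensional real inner product
space `V`, together with a fixed base `S` of simple roots. -/
structure RootSystemWithBase where
  /-- the finite set of roots -/
  R : Finset V
  /-- the base of simple roots -/
  S : Finset V
  zero_not_mem : (0 : V) ∉ R
  span_top : Submodule.span ℝ (R : Set V) = ⊤
  reduced : ∀ α ∈ R, ∀ t : ℝ, t • α ∈ R → t = 1 ∨ t = -1
  crystallographic : ∀ α ∈ R, ∀ β ∈ R, ∃ n : ℤ, 2 * ⟪β, α⟫_ℝ / ⟪α, α⟫_ℝ = (n : ℝ)
  reflect_mem : ∀ α ∈ R, ∀ β ∈ R, β - (2 * ⟪β, α⟫_ℝ / ⟪α, α⟫_ℝ) • α ∈ R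
  base_sub : S ⊆ R
  base_indep : LinearIndependent ℝ (Subtype.val : {x // x ∈ S} → V)
  base_span : Submodule.span ℝ (S : Set V) = ⊤
  base_decomp : ∀ β ∈ R, (∃ c : V → ℕ, β = ∑ α ∈ S, (c α : ℝ) • α) ∨
      (∃ c : V → ℕ, β = -∑ α ∈ S, (c α : ℝ) • α)

variable {V}
variable (Δ : RootSystemWithBase V)

namespace RootSystemWithBase

/-- the positive roots `R₊`: roots that are nonnegative-integer combinations of simple roots -/
def Rpos : Finset V := Δ.R.filter fun β => ∃ c : V → ℕ, β = ∑ α ∈ Δ.S, (c α : ℝ) • α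

/-- the negative roots `R₋ = -R₊` -/
def Rneg : Finset V := Δ.Rpos.image fun β => -β

/-- the Weyl group: the subgroup of linear automorphisms of `V` generated by the
reflections `x ↦ x - ⟨x, α^∨⟩ α` in the roots `α ∈ R` -/
def Weyl : Subgroup (V ≃ₗ[ℝ] V) :=
  Subgroup.closure {g | ∃ α ∈ Δ.R, ∀ x : V, g x = x - (2 * ⟪x, α⟫_ℝ / ⟪α, α⟫_ℝ) • α}

/-- the Weyl vector `ρ`: half the sum of the positive roots -/
def rho : V := (2 : ℝ)⁻¹ • ∑ α ∈ Δ.Rpos, α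

/-- the root lattice `Q`: the additive subgroup generated by the roots -/
def Qlat : AddSubgroup V := AddSubgroup.closure (Δ.R : Set V)

/-- membership in the weight lattice `P`: `⟨μ, α^∨⟩ ∈ ℤ` for all roots `α` -/
def IsWeight (μ : V) : Prop := ∀ α ∈ Δ.R, ∃ n : ℤ, 2 * ⟪μ, α⟫_ℝ / ⟪α, α⟫_ℝ = (n : ℝ)

/-- dominant weights (members of `P₊`): weights with `⟨μ, α^∨⟩ ≥ 0` for all simple `α` -/
def IsDominant (μ : V) : Prop :=
  Δ.IsWeight μ ∧ ∀ α ∈ Δ.S, 0 ≤ 2 * ⟪μ, α⟫_ℝ / ⟪α, α⟫_ℝ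

/-- `μ ≤ lam` iff `lam - μ` is a nonnegative-integer combination of simple roots -/
def wle (μ lam : V) : Prop := ∃ c : V → ℕ, lam - μ = ∑ α ∈ Δ.S, (c α : ℝ) • α

/-- the Weyl orbit `Wμ` of `μ` -/
def orbit (μ : V) : Set V := (fun w : V ≃ₗ[ℝ] V => w μ) '' (Δ.Weyl : Set (V ≃ₗ[ℝ] V))

/-- the lattice points of the weight polytope of `μ`: the points of the convex hull of
the Weyl orbit of `μ` lying in the shifted root lattice `μ + Q` -/
def Pts (μ : V) : Set V := convexHull ℝ (Δ.orbit μ) ∩ {v : V | v - μ ∈ Δ.Qlat}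

end RootSystemWithBase

/-- the formal exponential `e^μ` in the group ring -/
def expo (μ : V) : AddMonoidAlgebra ℤ V := AddMonoidAlgebra.single μ 1

/-- the fraction field `Frac(ℤ[P])` of the group ring -/
abbrev FR (V : Type) [NormedAddCommGroup V] [InnerProductSpace ℝ V]
    [FiniteDimensional ℝ V] := FractionRing (AddMonoidAlgebra ℤ V)

namespace RootSystemWithBase

/-- the polytope sum `B_μ = ∑_{ν ∈ conv(Wμ) ∩ (μ + Q)} e^ν` -/
def B (μ : V) : AddMonoidAlgebra ℤ V := ∑ᶠ ν ∈ Δ.Pts μ, expo ν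

/-- The Weyl character `χ_lam`, expressed with respect to an integer-valued sign
function `ε` (intended: `ε w = det w` for `w` in the Weyl group):
`χ_lam = (∑_w (det w) e^{w(lam+ρ)}) / (∑_w (det w) e^{wρ})`. -/
def ch (ε : (V ≃ₗ[ℝ] V) → ℤ) (lam : V) : FR V :=
  (∑ᶠ w ∈ (Δ.Weyl : Set (V ≃ₗ[ℝ] V)),
      ε w • algebraMap (AddMonoidAlgebra ℤ V) (FR V) (expo (w (lam + Δ.rho)))) /
  (∑ᶠ w ∈ (Δ.Weyl : Set (V ≃ₗ[ℝ] V)),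
      ε w • algebraMap (AddMonoidAlgebra ℤ V) (FR V) (expo (w Δ.rho)))

/-- the inversion set of `w`: the positive roots sent by `w` to negative roots -/
def inversions (w : V ≃ₗ[ℝ] V) : Finset V := Δ.Rpos.filter fun α => w α ∈ Δ.Rneg

/-- `S₋^w`: the simple roots sent by `w` to negative roots -/
def Sneg (w : V ≃ₗ[ℝ] V) : Finset V := Δ.S.filter fun α => w α ∈ Δ.Rneg

/-- `σ(w) = -∑_{α ∈ S, wα ∈ R₋} wα` -/
def sigmaw (w : V ≃ₗ[ℝ] V) : V := -∑ α ∈ Δ.Sneg w, w α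

/-- `|β|`: equal to `β` for `β ∈ R₊` and to `-β` for `β ∈ R₋` -/
def absRoot (β : V) : V := if β ∈ Δ.Rpos then β else -β

/-- the coefficients `F(β)` defined by `∏_{γ ∈ R₊ \ S} (1 - e^γ) = ∑_β F(β) e^β` -/
def Fcoef (β : V) : ℤ := (∏ γ ∈ Δ.Rpos \ Δ.S, (1 - expo γ)).coeff β

/-- the Weyl dimension polynomial `d(ν) = ∏_{α ∈ R₊} ⟨ν + ρ, α^∨⟩ / ⟨ρ, α^∨⟩` -/
def dimW (ν : V) : ℝ :=
  ∏ α ∈ Δ.Rpos, (2 * ⟪ν + Δ.rho, α⟫_ℝ / ⟪α, α⟫_ℝ) / (2 * ⟪Δ.rho, α⟫_ℝ / ⟪α, α⟫_ℝ)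

/-- `A⁻¹_{lam,μ} = ∑_{w ∈ W} (det w) F(lam - w.μ)` -/
def Ainv (ε : (V ≃ₗ[ℝ] V) → ℤ) (lam μ : V) : ℤ :=
  ∑ᶠ w ∈ (Δ.Weyl : Set (V ≃ₗ[ℝ] V)), ε w * Δ.Fcoef (lam - (w (μ + Δ.rho) - Δ.rho))

/-- `U_{lam,sig}^ν = ∑_{w ∈ W} (det w) δ_sig(w.ν - lam)`, where `δ_sig` is the indicator
function of the lattice points of the weight polytope of `sig` -/
def Ucoef (ε : (V ≃ₗ[ℝ] V) → ℤ) (lam sig ν : V) : ℤ :=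
  ∑ᶠ w ∈ (Δ.Weyl : Set (V ≃ₗ[ℝ] V)),
    ε w * (if w (ν + Δ.rho) - Δ.rho - lam ∈ Δ.Pts sig then (1 : ℤ) else 0)

/-- the Weyl orbit sum `E_μ = ∑_{φ ∈ Wμ} e^φ` -/
def Eorb (μ : V) : AddMonoidAlgebra ℤ V := ∑ᶠ φ ∈ Δ.orbit μ, expo φ

/-- `M⁻¹_{lam,μ} = (|W lam| / |W|) ∑_{x,w ∈ W} (det w) δ(x lam + wρ, μ + ρ)` -/
def Minv (ε : (V ≃ₗ[ℝ] V) → ℤ) (lam μ : V) : ℚ :=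
  (((Δ.orbit lam).ncard : ℚ) / (((Δ.Weyl : Set (V ≃ₗ[ℝ] V)).ncard : ℚ))) *
    ∑ᶠ x ∈ (Δ.Weyl : Set (V ≃ₗ[ℝ] V)), ∑ᶠ w ∈ (Δ.Weyl : Set (V ≃ₗ[ℝ] V)),
      (ε w : ℚ) * (if x lam + w Δ.rho = μ + Δ.rho then (1 : ℚ) else 0)

end RootSystemWithBase


/-! ### Auxiliary development -/

namespace RootSystemWithBase

section Reflections

/-- The underlying linear map of the reflection in `α`. -/
def reflLM (α : V) : V →ₗ[ℝ] V where
  toFun x := x - (2 * ⟪x, α⟫_ℝ / ⟪α, α⟫_ℝ) • α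
  map_add' x y := by
    simp only [inner_add_left]
    rw [show 2 * (⟪x, α⟫_ℝ + ⟪y, α⟫_ℝ) / ⟪α, α⟫_ℝ
        = 2 * ⟪x, α⟫_ℝ / ⟪α, α⟫_ℝ + 2 * ⟪y, α⟫_ℝ / ⟪α, α⟫_ℝ by ring,
      add_smul]
    abel
  map_smul' r x := by
    simp only [real_inner_smul_left, RingHom.id_apply]
    rw [show 2 * (r * ⟪x, α⟫_ℝ) / ⟪α, α⟫_ℝ = r * (2 * ⟪x, α⟫_ℝ / ⟪α, α⟫_ℝ) by ring,
      smul_sub, smul_smul]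

lemma reflLM_apply (α x : V) : reflLM α x = x - (2 * ⟪x, α⟫_ℝ / ⟪α, α⟫_ℝ) • α := rfl

lemma reflLM_involutive (α : V) : Function.Involutive (reflLM α) := by
  intro x
  by_cases hα : α = 0
  · simp [reflLM_apply, hα]
  · have hc : ⟪α, α⟫_ℝ ≠ 0 := by
      intro h; exact hα (inner_self_eq_zero.mp h)
    simp only [reflLM_apply, inner_sub_left, real_inner_smul_left]
    rw [show 2 * (⟪x, α⟫_ℝ - 2 * ⟪x, α⟫_ℝ / ⟪α, α⟫_ℝ * ⟪α, α⟫_ℝ) / ⟪α, α⟫_ℝ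
        = - (2 * ⟪x, α⟫_ℝ / ⟪α, α⟫_ℝ) by field_simp; ring]
    rw [neg_smul]
    abel

/-- Reflection in the vector `α`, as a linear automorphism. -/
def sroot (α : V) : V ≃ₗ[ℝ] V :=
  LinearEquiv.ofInvolutive (reflLM α) (reflLM_involutive α)

lemma sroot_apply (α x : V) : sroot α x = x - (2 * ⟪x, α⟫_ℝ / ⟪α, α⟫_ℝ) • α := rfl

lemma sroot_mem_weyl {α : V} (hα : α ∈ Δ.R) : sroot α ∈ Δ.Weyl :=
  Subgroup.subset_closure ⟨α, hα, fun _ => rfl⟩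

lemma sroot_inner (α x y : V) : ⟪sroot α x, sroot α y⟫_ℝ = ⟪x, y⟫_ℝ := by
  by_cases hα : α = 0
  · simp [sroot_apply, hα]
  · have hc : ⟪α, α⟫_ℝ ≠ 0 := by
      intro h; exact hα (inner_self_eq_zero.mp h)
    simp only [sroot_apply, inner_sub_left, inner_sub_right, real_inner_smul_left,
      real_inner_smul_right]
    rw [real_inner_comm y α]
    field_simp
    ring

lemma sroot_apply_self {α : V} (hα : α ≠ 0) : sroot α α = -α := by
  have hc : ⟪α, α⟫_ℝ ≠ 0 := by
    intro h; exact hα (inner_self_eq_zero.mp h)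
  rw [sroot_apply, mul_div_assoc, div_self hc, mul_one]
  rw [two_smul]; abel

lemma sroot_apply_perp {α x : V} (h : ⟪x, α⟫_ℝ = 0) : sroot α x = x := by
  simp [sroot_apply, h]

lemma sroot_sroot (α x : V) : sroot α (sroot α x) = x := reflLM_involutive α x

lemma sroot_mul_self (α : V) : sroot α * sroot α = 1 :=
  LinearEquiv.ext fun x => reflLM_involutive α x

lemma sroot_inv (α : V) : (sroot α)⁻¹ = sroot α :=
  inv_eq_of_mul_eq_one_right (sroot_mul_self α)

lemma sroot_neg (α : V) : sroot (-α) = sroot α := by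
  refine LinearEquiv.ext fun x => ?_
  simp only [sroot_apply, inner_neg_right, inner_neg_left, smul_neg, neg_neg,
    inner_neg_neg]
  rw [show 2 * -⟪x, α⟫_ℝ / ⟪α, α⟫_ℝ = - (2 * ⟪x, α⟫_ℝ / ⟪α, α⟫_ℝ) by ring,
    neg_smul, neg_neg]

end Reflections

section WeylBasic

variable {Δ : RootSystemWithBase V}

lemma root_ne_zero {α : V} (hα : α ∈ Δ.R) : α ≠ 0 := fun h => Δ.zero_not_mem (h ▸ hα)

lemma inner_root_pos {α : V} (hα : α ∈ Δ.R) : 0 < ⟪α, α⟫_ℝ :=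
  lt_of_le_of_ne real_inner_self_nonneg
    (Ne.symm (fun h => root_ne_zero hα (inner_self_eq_zero.mp h)))

lemma weyl_gen_eq_sroot {g : V ≃ₗ[ℝ] V}
    (hg : ∃ α ∈ Δ.R, ∀ x : V, g x = x - (2 * ⟪x, α⟫_ℝ / ⟪α, α⟫_ℝ) • α) :
    ∃ α ∈ Δ.R, g = sroot α := by
  obtain ⟨α, hα, h⟩ := hg
  exact ⟨α, hα, LinearEquiv.ext fun x => h x⟩

lemma mul_apply (u w : V ≃ₗ[ℝ] V) (x : V) : (u * w) x = u (w x) := rfl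

lemma inv_apply_eq (w : V ≃ₗ[ℝ] V) (x : V) : w (w⁻¹ x) = x := w.apply_symm_apply x

lemma inv_apply_eq' (w : V ≃ₗ[ℝ] V) (x : V) : w⁻¹ (w x) = x := w.symm_apply_apply x

/-- Elements of the Weyl group preserve the inner product. -/
lemma weyl_inner {w : V ≃ₗ[ℝ] V} (hw : w ∈ Δ.Weyl) (x y : V) :
    ⟪w x, w y⟫_ℝ = ⟪x, y⟫_ℝ := by
  revert x y
  induction hw using Subgroup.closure_induction with
  | mem g hg =>
    obtain ⟨α, _, rfl⟩ := weyl_gen_eq_sroot hg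
    exact sroot_inner α
  | one => intro x y; rfl
  | mul u v _ _ hu hv => intro x y; simp only [mul_apply]; rw [hu (v x) (v y), hv x y]
  | inv u _ hu =>
    intro x y
    have := hu (u⁻¹ x) (u⁻¹ y)
    rw [inv_apply_eq, inv_apply_eq] at this
    exact this.symm

/-- Elements of the Weyl group map roots to roots. -/
lemma weyl_maps_R {w : V ≃ₗ[ℝ] V} (hw : w ∈ Δ.Weyl) {β : V} (hβ : β ∈ Δ.R) :
    w β ∈ Δ.R := by
  revert β
  induction hw using Subgroup.closure_induction with
  | mem g hg =>
    obtain ⟨α, hα, rfl⟩ := weyl_gen_eq_sroot hg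
    intro β hβ
    exact Δ.reflect_mem α hα β hβ
  | one => intro β hβ; exact hβ
  | mul u v _ _ hu hv => intro β hβ; exact hu (hv hβ)
  | inv u _ hu =>
    intro β hβ
    have himg : Δ.R.image (fun x => u x) = Δ.R := by
      apply Finset.eq_of_subset_of_card_le
      · intro x hx
        obtain ⟨γ, hγ, rfl⟩ := Finset.mem_image.mp hx
        exact hu hγ
      · rw [Finset.card_image_of_injective _ u.injective]
    rw [← himg] at hβ
    obtain ⟨γ, hγ, h⟩ := Finset.mem_image.mp hβ
    have : u⁻¹ β = γ := by rw [← h, inv_apply_eq']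
    rw [this]; exact hγ

lemma weyl_image_R {w : V ≃ₗ[ℝ] V} (hw : w ∈ Δ.Weyl) :
    Δ.R.image (fun x => w x) = Δ.R := by
  apply Finset.eq_of_subset_of_card_le
  · intro x hx
    obtain ⟨γ, hγ, rfl⟩ := Finset.mem_image.mp hx
    exact weyl_maps_R hw hγ
  · rw [Finset.card_image_of_injective _ w.injective]

/-- The Weyl group is finite. -/
lemma weyl_finite : (Δ.Weyl : Set (V ≃ₗ[ℝ] V)).Finite := by
  have : Finite ↥(Δ.Weyl : Set (V ≃ₗ[ℝ] V)) := by
    let f : ↥(Δ.Weyl : Set (V ≃ₗ[ℝ] V)) → ({x // x ∈ Δ.R} → {x // x ∈ Δ.R}) :=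
      fun w β => ⟨w.1 β.1, weyl_maps_R w.2 β.2⟩
    have hf : Function.Injective f := by
      intro w w' h
      apply Subtype.ext
      have heq : ∀ β ∈ Δ.R, w.1 β = w'.1 β := by
        intro β hβ
        have := congrFun h ⟨β, hβ⟩
        exact congrArg Subtype.val this
      have : (w.1 : V →ₗ[ℝ] V) = (w'.1 : V →ₗ[ℝ] V) :=
        LinearMap.ext_on Δ.span_top heq
      ext x
      exact LinearMap.congr_fun this x
    exact Finite.of_injective f hf
  exact Set.toFinite _

/-- Determinant of a reflection is `-1`. -/
lemma det_sroot {α : V} (hα : α ≠ 0) :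
    LinearMap.det ((sroot α : V ≃ₗ[ℝ] V) : V →ₗ[ℝ] V) = -1 := by
  classical
  have hc : ⟪α, α⟫_ℝ ≠ 0 := fun h => hα (inner_self_eq_zero.mp h)
  -- the linear functional x ↦ 2⟪x,α⟫/⟪α,α⟫
  let f : V →ₗ[ℝ] ℝ :=
    { toFun := fun x => 2 * ⟪x, α⟫_ℝ / ⟪α, α⟫_ℝ
      map_add' := fun x y => by simp only [inner_add_left]; ring
      map_smul' := fun r x => by
        simp only [real_inner_smul_left, RingHom.id_apply, smul_eq_mul]; ring }
  have hs : ((sroot α : V ≃ₗ[ℝ] V) : V →ₗ[ℝ] V) = LinearMap.id + f.smulRight (-α) := by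
    ext x
    simp only [LinearMap.add_apply, LinearMap.id_apply, LinearMap.smulRight_apply,
      smul_neg]
    rw [← sub_eq_add_neg]
    rfl
  let b := Module.finBasis ℝ V
  rw [hs, ← LinearMap.det_toMatrix b, map_add, LinearMap.toMatrix_id]
  have hm : LinearMap.toMatrix b b (f.smulRight (-α)) =
      Matrix.replicateCol Unit (fun i => b.repr (-α) i) * Matrix.replicateRow Unit (fun j => f (b j)) := by
    ext i j
    simp only [LinearMap.toMatrix_apply, LinearMap.smulRight_apply, map_smul,
      Finsupp.smul_apply, smul_eq_mul, Matrix.mul_apply, Matrix.replicateCol_apply,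
      Matrix.replicateRow_apply, Finset.univ_unique, Finset.sum_singleton]
    ring
  rw [hm, Matrix.det_one_add_replicateCol_mul_replicateRow]
  have : dotProduct (fun j => f (b j)) (fun i => b.repr (-α) i) = f (-α) := by
    rw [dotProduct]
    have := b.sum_repr (-α)
    calc ∑ j, f (b j) * b.repr (-α) j = ∑ j, f (b.repr (-α) j • b j) := by
          apply Finset.sum_congr rfl
          intro j _
          rw [map_smul, smul_eq_mul, mul_comm]
      _ = f (∑ j, b.repr (-α) j • b j) := (map_sum f _ _).symm
      _ = f (-α) := by rw [this]
  rw [this]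
  show 1 + 2 * ⟪-α, α⟫_ℝ / ⟪α, α⟫_ℝ = -1
  rw [inner_neg_left]
  field_simp
  ring

lemma weyl_det_pm {w : V ≃ₗ[ℝ] V} (hw : w ∈ Δ.Weyl) :
    LinearMap.det (w : V →ₗ[ℝ] V) = 1 ∨ LinearMap.det (w : V →ₗ[ℝ] V) = -1 := by
  induction hw using Subgroup.closure_induction with
  | mem g hg =>
    obtain ⟨α, hα, rfl⟩ := weyl_gen_eq_sroot hg
    exact Or.inr (det_sroot (root_ne_zero hα))
  | one => left; simp
  | mul u v _ _ hu hv =>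
    have : ((u * v : V ≃ₗ[ℝ] V) : V →ₗ[ℝ] V) = (u : V →ₗ[ℝ] V) ∘ₗ (v : V →ₗ[ℝ] V) :=
      rfl
    rw [this, LinearMap.det_comp]
    rcases hu with h1 | h1 <;> rcases hv with h2 | h2 <;> rw [h1, h2] <;> norm_num
  | inv u _ hu =>
    have hmul : LinearMap.det ((u : V →ₗ[ℝ] V)) * LinearMap.det ((u⁻¹ : V ≃ₗ[ℝ] V) : V →ₗ[ℝ] V) = 1 := by
      rw [← LinearMap.det_comp]
      have : (u : V →ₗ[ℝ] V) ∘ₗ ((u⁻¹ : V ≃ₗ[ℝ] V) : V →ₗ[ℝ] V) =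
          ((u * u⁻¹ : V ≃ₗ[ℝ] V) : V →ₗ[ℝ] V) := rfl
      rw [this, mul_inv_cancel]
      simp
    rcases hu with h1 | h1 <;> rw [h1] at hmul
    · left; linarith
    · right; linarith

section Sign

variable (ε : (V ≃ₗ[ℝ] V) → ℤ)
variable (hε : ∀ w ∈ Δ.Weyl, ((ε w : ℤ) : ℝ) = LinearMap.det ((w : V ≃ₗ[ℝ] V) : V →ₗ[ℝ] V))

include hε

lemma eps_one : ε 1 = 1 := by
  have := hε 1 (one_mem _)
  simp at this
  exact_mod_cast this

lemma eps_mul {u w : V ≃ₗ[ℝ] V} (hu : u ∈ Δ.Weyl) (hw : w ∈ Δ.Weyl) :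
    ε (u * w) = ε u * ε w := by
  have h1 := hε u hu
  have h2 := hε w hw
  have h3 := hε (u * w) (mul_mem hu hw)
  have hm : ((u * w : V ≃ₗ[ℝ] V) : V →ₗ[ℝ] V) = (u : V →ₗ[ℝ] V) ∘ₗ (w : V →ₗ[ℝ] V) := rfl
  rw [hm, LinearMap.det_comp, ← h1, ← h2] at h3
  exact_mod_cast h3

lemma eps_pm {w : V ≃ₗ[ℝ] V} (hw : w ∈ Δ.Weyl) : ε w = 1 ∨ ε w = -1 := by
  have h := hε w hw
  rcases weyl_det_pm hw with h1 | h1 <;> rw [h1] at h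
  · left; exact_mod_cast h
  · right; exact_mod_cast h

lemma eps_mul_self {w : V ≃ₗ[ℝ] V} (hw : w ∈ Δ.Weyl) : ε w * ε w = 1 := by
  rcases eps_pm ε hε hw with h | h <;> rw [h] <;> norm_num

lemma eps_inv {w : V ≃ₗ[ℝ] V} (hw : w ∈ Δ.Weyl) : ε w⁻¹ = ε w := by
  have h := eps_mul ε hε hw (inv_mem hw)
  rw [mul_inv_cancel, eps_one ε hε] at h
  rcases eps_pm ε hε hw with h1 | h1 <;> rcases eps_pm ε hε (inv_mem hw) with h2 | h2 <;>
    rw [h1, h2] <;> rw [h1, h2] at h <;> first | rfl | (exfalso; norm_num at h)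

lemma eps_sroot {α : V} (hα : α ∈ Δ.R) : ε (sroot α) = -1 := by
  have h := hε (sroot α) (sroot_mem_weyl Δ hα)
  rw [det_sroot (root_ne_zero hα)] at h
  exact_mod_cast h

end Sign

section Simple

/-- Uniqueness of coefficients along the base. -/
lemma coeff_unique {c d : V → ℝ}
    (h : ∑ α ∈ Δ.S, c α • α = ∑ α ∈ Δ.S, d α • α) : ∀ α ∈ Δ.S, c α = d α := by
  intro α hα
  have h0 : ∑ a ∈ Δ.S.attach, (c a.1 - d a.1) • a.1 = 0 := by
    rw [Finset.sum_attach Δ.S (fun a => (c a - d a) • a)]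
    simp only [sub_smul, Finset.sum_sub_distrib, h, sub_self]
  have := linearIndependent_iff'.mp Δ.base_indep Δ.S.attach
    (fun a => c a.1 - d a.1) h0 ⟨α, hα⟩ (Finset.mem_attach _ _)
  have : c α - d α = 0 := this
  linarith

lemma neg_root_mem {β : V} (hβ : β ∈ Δ.R) : -β ∈ Δ.R := by
  have h := Δ.reflect_mem β hβ β hβ
  have hc : ⟪β, β⟫_ℝ ≠ 0 := ne_of_gt (inner_root_pos hβ)
  rw [mul_div_assoc, div_self hc, mul_one, two_smul] at h
  have : β - (β + β) = -β := by abel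
  rwa [this] at h

lemma mem_Rpos_iff {β : V} :
    β ∈ Δ.Rpos ↔ β ∈ Δ.R ∧ ∃ c : V → ℕ, β = ∑ α ∈ Δ.S, (c α : ℝ) • α :=
  Finset.mem_filter

lemma mem_Rneg_iff {β : V} : β ∈ Δ.Rneg ↔ -β ∈ Δ.Rpos := by
  constructor
  · rintro h
    obtain ⟨γ, hγ, rfl⟩ := Finset.mem_image.mp h
    rwa [neg_neg]
  · intro h
    exact Finset.mem_image.mpr ⟨-β, h, neg_neg β⟩

lemma Rpos_subset_R : Δ.Rpos ⊆ Δ.R := Finset.filter_subset _ _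

lemma Rneg_subset_R : Δ.Rneg ⊆ Δ.R := by
  intro β hβ
  have := Rpos_subset_R (mem_Rneg_iff.mp hβ)
  have := neg_root_mem this
  rwa [neg_neg] at this

lemma root_pos_or_neg {β : V} (hβ : β ∈ Δ.R) : β ∈ Δ.Rpos ∨ β ∈ Δ.Rneg := by
  rcases Δ.base_decomp β hβ with ⟨c, hc⟩ | ⟨c, hc⟩
  · exact Or.inl (mem_Rpos_iff.mpr ⟨hβ, c, hc⟩)
  · right
    rw [mem_Rneg_iff]
    refine mem_Rpos_iff.mpr ⟨neg_root_mem hβ, c, ?_⟩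
    rw [hc, neg_neg]

lemma not_pos_and_neg {β : V} (h1 : β ∈ Δ.Rpos) (h2 : β ∈ Δ.Rneg) : False := by
  obtain ⟨-, c, hc⟩ := mem_Rpos_iff.mp h1
  obtain ⟨-, d, hd⟩ := mem_Rpos_iff.mp (mem_Rneg_iff.mp h2)
  have hsum : ∑ α ∈ Δ.S, ((c α : ℝ) + (d α : ℝ)) • α = ∑ α ∈ Δ.S, (0 : ℝ) • α := by
    simp only [add_smul, Finset.sum_add_distrib, ← hc, ← hd]
    simp
  have hz := coeff_unique (Δ := Δ) hsum
  have hβ0 : β = 0 := by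
    rw [hc]
    apply Finset.sum_eq_zero
    intro α hα
    have := hz α hα
    have hc0 : (c α : ℝ) = 0 := by
      have := Nat.cast_nonneg (α := ℝ) (c α)
      have := Nat.cast_nonneg (α := ℝ) (d α)
      linarith [hz α hα]
    rw [hc0, zero_smul]
  exact root_ne_zero (Rpos_subset_R h1) hβ0

lemma simple_mem_Rpos {α : V} (hα : α ∈ Δ.S) : α ∈ Δ.Rpos := by
  refine mem_Rpos_iff.mpr ⟨Δ.base_sub hα, fun γ => if γ = α then 1 else 0, ?_⟩
  have : ∀ γ ∈ Δ.S, ((if γ = α then (1:ℕ) else 0 : ℕ) : ℝ) • γ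
      = if γ = α then γ else 0 := by
    intro γ _
    by_cases h : γ = α <;> simp [h]
  rw [Finset.sum_congr rfl this, Finset.sum_ite_eq' Δ.S α (fun γ => γ), if_pos hα]

lemma dom_inner_pos {κ : V} (hκ : ∀ α ∈ Δ.S, 0 < ⟪κ, α⟫_ℝ) {β : V} (hβ : β ∈ Δ.Rpos) :
    0 < ⟪κ, β⟫_ℝ := by
  obtain ⟨hβR, c, hc⟩ := mem_Rpos_iff.mp hβ
  rw [hc, inner_sum]
  simp only [real_inner_smul_right]
  apply Finset.sum_pos'
  · intro α hα
    exact mul_nonneg (Nat.cast_nonneg _) (le_of_lt (hκ α hα))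
  · by_contra hcon
    push_neg at hcon
    apply root_ne_zero hβR
    rw [hc]
    apply Finset.sum_eq_zero
    intro α hα
    have h1 := hcon α hα
    have h2 := hκ α hα
    have : (c α : ℝ) = 0 := by
      rcases Nat.eq_zero_or_pos (c α) with h | h
      · exact_mod_cast h
      · exfalso
        have : (0:ℝ) < (c α : ℝ) := by exact_mod_cast h
        nlinarith
    rw [this, zero_smul]

lemma dom_inner_nonneg {κ : V} (hκ : ∀ α ∈ Δ.S, 0 ≤ ⟪κ, α⟫_ℝ) {β : V} (hβ : β ∈ Δ.Rpos) :
    0 ≤ ⟪κ, β⟫_ℝ := by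
  obtain ⟨hβR, c, hc⟩ := mem_Rpos_iff.mp hβ
  rw [hc, inner_sum]
  simp only [real_inner_smul_right]
  exact Finset.sum_nonneg fun α hα => mul_nonneg (Nat.cast_nonneg _) (hκ α hα)

/-- `s_α` permutes the positive roots other than `α`. -/
lemma sroot_simple_perm {α β : V} (hα : α ∈ Δ.S) (hβ : β ∈ Δ.Rpos) (hne : β ≠ α) :
    sroot α β ∈ Δ.Rpos ∧ sroot α β ≠ α := by
  have hαR : α ∈ Δ.R := Δ.base_sub hα
  obtain ⟨hβR, c, hc⟩ := mem_Rpos_iff.mp hβ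
  -- some coefficient away from α is nonzero
  have hex : ∃ γ₀ ∈ Δ.S, γ₀ ≠ α ∧ 0 < c γ₀ := by
    by_contra hcon
    push_neg at hcon
    have hmult : β = (c α : ℝ) • α := by
      rw [hc]
      have hstep : ∑ γ ∈ Δ.S, (c γ : ℝ) • γ
          = ∑ γ ∈ Δ.S, (if γ = α then (c γ : ℝ) • γ else 0) := by
        apply Finset.sum_congr rfl
        intro γ hγ
        by_cases h : γ = α
        · simp [h]
        · have h0 : c γ ≤ 0 := hcon γ hγ h
          have : c γ = 0 := by omega
          simp [h, this]
      rw [hstep, Finset.sum_ite_eq' Δ.S α (fun γ => (c γ : ℝ) • γ), if_pos hα]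
    have := Δ.reduced α hαR (c α) (by rw [← hmult]; exact hβR)
    rcases this with h | h
    · apply hne; rw [hmult, h, one_smul]
    · have : (0:ℝ) ≤ (c α : ℝ) := Nat.cast_nonneg _
      rw [h] at this; norm_num at this
  obtain ⟨γ₀, hγ₀S, hγ₀ne, hγ₀pos⟩ := hex
  -- the reflected root
  obtain ⟨n, hn⟩ := Δ.crystallographic α hαR β hβR
  have hmem : sroot α β ∈ Δ.R := Δ.reflect_mem α hαR β hβR
  -- real coefficient expression for `sroot α β`
  have hexpr : sroot α β = ∑ γ ∈ Δ.S, ((c γ : ℝ) - (n:ℝ) * (if γ = α then 1 else 0)) • γ := by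
    rw [sroot_apply, hn, hc]
    simp only [sub_smul, Finset.sum_sub_distrib, mul_smul]
    congr 1
    rw [← Finset.smul_sum]
    congr 1
    have : ∀ γ ∈ Δ.S, (if γ = α then (1:ℝ) else 0) • γ = if γ = α then γ else 0 := by
      intro γ _
      by_cases h : γ = α <;> simp [h]
    rw [Finset.sum_congr rfl this, Finset.sum_ite_eq' Δ.S α (fun γ => γ), if_pos hα]
  constructor
  · rcases root_pos_or_neg (Δ := Δ) hmem with h | h
    · exact h
    · exfalso
      obtain ⟨-, d, hd⟩ := mem_Rpos_iff.mp (mem_Rneg_iff.mp h)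
      have hd' : sroot α β = ∑ γ ∈ Δ.S, (-(d γ : ℝ)) • γ := by
        have : sroot α β = -∑ γ ∈ Δ.S, (d γ : ℝ) • γ := by
          rw [← hd]; rw [neg_neg]
        rw [this, ← Finset.sum_neg_distrib]
        apply Finset.sum_congr rfl
        intro γ _
        rw [neg_smul]
      have := coeff_unique (Δ := Δ) (hexpr ▸ hd' ▸ rfl : ∑ γ ∈ Δ.S, ((c γ : ℝ) - (n:ℝ) * (if γ = α then 1 else 0)) • γ = ∑ γ ∈ Δ.S, (-(d γ : ℝ)) • γ)
      have h0 := this γ₀ hγ₀S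
      rw [if_neg hγ₀ne] at h0
      have h1 : (0:ℝ) < (c γ₀ : ℝ) := by exact_mod_cast hγ₀pos
      have h2 : (0:ℝ) ≤ (d γ₀ : ℝ) := Nat.cast_nonneg _
      rw [mul_zero, sub_zero] at h0
      linarith
  · intro hcon
    -- then β = sroot α α = -α
    have hinv : sroot α (sroot α β) = β := reflLM_involutive α β
    have hthis : β = sroot α α := by
      have h2 := congrArg (fun z => sroot α z) hcon
      rw [hinv] at h2
      exact h2
    rw [sroot_apply_self (root_ne_zero hαR)] at hthis
    -- β = -α contradicts β positive
    have hβneg : β ∈ Δ.Rneg := by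
      rw [mem_Rneg_iff, hthis, neg_neg]
      exact simple_mem_Rpos hα
    exact not_pos_and_neg hβ hβneg

lemma sroot_image_erase {α : V} (hα : α ∈ Δ.S) :
    (Δ.Rpos.erase α).image (fun β => sroot α β) = Δ.Rpos.erase α := by
  apply Finset.eq_of_subset_of_card_le
  · intro x hx
    obtain ⟨β, hβ, rfl⟩ := Finset.mem_image.mp hx
    obtain ⟨hβ1, hβ2⟩ := Finset.mem_erase.mp hβ
    obtain ⟨h1, h2⟩ := sroot_simple_perm hα hβ2 hβ1
    exact Finset.mem_erase.mpr ⟨h2, h1⟩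
  · rw [Finset.card_image_of_injective _ (sroot α).injective]

lemma sroot_rho {α : V} (hα : α ∈ Δ.S) : sroot α Δ.rho = Δ.rho - α := by
  have hαR : α ∈ Δ.R := Δ.base_sub hα
  have hαpos : α ∈ Δ.Rpos := simple_mem_Rpos hα
  have hmap : sroot α Δ.rho = (2:ℝ)⁻¹ • ∑ β ∈ Δ.Rpos, sroot α β := by
    rw [rho, map_smul, map_sum]
  have hsum : ∑ β ∈ Δ.Rpos, sroot α β = (∑ β ∈ Δ.Rpos, β) - (2:ℝ) • α := by
    rw [← Finset.add_sum_erase _ _ hαpos]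
    have himg : ∑ β ∈ Δ.Rpos.erase α, sroot α β
        = ∑ β ∈ Δ.Rpos.erase α, β := by
      have h1 : ∑ β ∈ (Δ.Rpos.erase α).image (fun β => sroot α β), β
          = ∑ β ∈ Δ.Rpos.erase α, sroot α β :=
        Finset.sum_image (fun x _ y _ h => (sroot α).injective h)
      rw [← h1, sroot_image_erase hα]
    rw [himg, sroot_apply_self (root_ne_zero hαR), Finset.sum_erase_eq_sub hαpos]
    rw [two_smul]
    abel
  rw [hmap, hsum, rho]
  rw [smul_sub, smul_smul]
  norm_num

lemma pair_rho_simple {α : V} (hα : α ∈ Δ.S) : 2 * ⟪Δ.rho, α⟫_ℝ / ⟪α, α⟫_ℝ = 1 := by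
  have h := sroot_rho (Δ := Δ) hα
  rw [sroot_apply] at h
  have : (2 * ⟪Δ.rho, α⟫_ℝ / ⟪α, α⟫_ℝ) • α = (1:ℝ) • α := by
    rw [one_smul]
    exact sub_right_injective h
  have hα0 : α ≠ 0 := root_ne_zero (Δ.base_sub hα)
  have := sub_eq_zero.mpr this
  rw [← sub_smul] at this
  rcases smul_eq_zero.mp this with h' | h'
  · linarith [sub_eq_zero.mp h']
  · exact absurd h' hα0

lemma rho_inner_simple_pos {α : V} (hα : α ∈ Δ.S) : 0 < ⟪Δ.rho, α⟫_ℝ := by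
  have h := pair_rho_simple (Δ := Δ) hα
  have hc : 0 < ⟪α, α⟫_ℝ := inner_root_pos (Δ.base_sub hα)
  have : 2 * ⟪Δ.rho, α⟫_ℝ = ⟪α, α⟫_ℝ := by
    field_simp at h
    linarith
  linarith

end Simple

section Words

/-- Product of the reflections along a list of vectors; the head acts first. -/
def prodRefl : List V → (V ≃ₗ[ℝ] V)
  | [] => 1
  | α :: l => prodRefl l * sroot α

@[simp] lemma prodRefl_nil : prodRefl ([] : List V) = 1 := rfl

@[simp] lemma prodRefl_cons (α : V) (l : List V) :
    prodRefl (α :: l) = prodRefl l * sroot α := rfl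

lemma prodRefl_append (l₁ l₂ : List V) :
    prodRefl (l₁ ++ l₂) = prodRefl l₂ * prodRefl l₁ := by
  induction l₁ with
  | nil => simp
  | cons a t ih => simp [ih, mul_assoc]

lemma prodRefl_mem_weyl {l : List V} (hl : ∀ α ∈ l, α ∈ Δ.R) :
    prodRefl l ∈ Δ.Weyl := by
  induction l with
  | nil => exact one_mem _
  | cons a t ih =>
    exact mul_mem (ih fun α hα => hl α (List.mem_cons_of_mem a hα))
      (sroot_mem_weyl Δ (hl a (List.mem_cons_self)))

/-- The subgroup generated by the simple reflections. -/
def WS (Δ : RootSystemWithBase V) : Subgroup (V ≃ₗ[ℝ] V) :=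
  Subgroup.closure ((fun α => sroot α) '' (Δ.S : Set V))

lemma sroot_mem_WS {α : V} (hα : α ∈ Δ.S) : sroot α ∈ WS Δ :=
  Subgroup.subset_closure ⟨α, hα, rfl⟩

lemma prodRefl_mem_WS {l : List V} (hl : ∀ α ∈ l, α ∈ Δ.S) :
    prodRefl l ∈ WS Δ := by
  induction l with
  | nil => exact one_mem _
  | cons a t ih =>
    exact mul_mem (ih fun α hα => hl α (List.mem_cons_of_mem a hα))
      (sroot_mem_WS (hl a (List.mem_cons_self)))

lemma prodRefl_reverse (l : List V) (hl : ∀ α ∈ l, α ∈ Δ.R) :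
    prodRefl l.reverse = (prodRefl l)⁻¹ := by
  induction l with
  | nil => simp
  | cons a t ih =>
    have hat : ∀ α ∈ t, α ∈ Δ.R := fun α hα => hl α (List.mem_cons_of_mem a hα)
    rw [List.reverse_cons, prodRefl_append]
    simp [prodRefl_cons, ih hat, mul_inv_rev, sroot_inv]

lemma exists_word_of_WS {w : V ≃ₗ[ℝ] V} (hw : w ∈ WS Δ) :
    ∃ l : List V, (∀ α ∈ l, α ∈ Δ.S) ∧ prodRefl l = w := by
  induction hw using Subgroup.closure_induction with
  | mem g hg =>
    obtain ⟨α, hα, rfl⟩ := hg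
    exact ⟨[α], by simpa using hα, by simp⟩
  | one => exact ⟨[], by simp, rfl⟩
  | mul u v _ _ hu hv =>
    obtain ⟨lu, hlu, hpu⟩ := hu
    obtain ⟨lv, hlv, hpv⟩ := hv
    refine ⟨lv ++ lu, ?_, ?_⟩
    · intro α hα
      rcases List.mem_append.mp hα with h | h
      · exact hlv α h
      · exact hlu α h
    · rw [prodRefl_append, hpu, hpv]
  | inv u _ hu =>
    obtain ⟨lu, hlu, hpu⟩ := hu
    refine ⟨lu.reverse, ?_, ?_⟩
    · intro α hα
      exact hlu α (List.mem_reverse.mp hα)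
    · rw [prodRefl_reverse lu (fun α hα => Δ.base_sub (hlu α hα)), hpu]

/-- Conjugation formula for reflections. -/
lemma sroot_conj {w : V ≃ₗ[ℝ] V} (hw : w ∈ Δ.Weyl) (β : V) :
    sroot (w β) = w * sroot β * w⁻¹ := by
  refine LinearEquiv.ext fun x => ?_
  have h1 : (w * sroot β * w⁻¹) x = w (sroot β (w⁻¹ x)) := rfl
  rw [h1, sroot_apply, sroot_apply, map_sub, inv_apply_eq, map_smul]
  congr 2
  rw [show ⟪x, w β⟫_ℝ = ⟪w (w⁻¹ x), w β⟫_ℝ by rw [inv_apply_eq],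
    weyl_inner hw, weyl_inner hw]


/-- Every positive root is obtained from a simple root by the subgroup generated by
simple reflections, and its reflection lies in that subgroup. -/
lemma sroot_expr {α β : V} (hα : α ∈ Δ.S) (c : V → ℕ) (k : ℤ)
    (hc : β = ∑ γ ∈ Δ.S, (c γ : ℝ) • γ) (hk : 2 * ⟪β, α⟫_ℝ / ⟪α, α⟫_ℝ = (k:ℝ)) :
    sroot α β = ∑ γ ∈ Δ.S, ((c γ : ℝ) - (k:ℝ) * (if γ = α then 1 else 0)) • γ := by
  rw [sroot_apply, hk]
  conv_lhs => rw [hc]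
  simp only [sub_smul, Finset.sum_sub_distrib, mul_smul]
  congr 1
  rw [← Finset.smul_sum]
  congr 1
  have : ∀ γ ∈ Δ.S, (if γ = α then (1:ℝ) else 0) • γ = if γ = α then γ else 0 := by
    intro γ _
    by_cases h : γ = α <;> simp [h]
  rw [Finset.sum_congr rfl this, Finset.sum_ite_eq' Δ.S α (fun γ => γ), if_pos hα]

lemma pos_root_reachable : ∀ (n : ℕ), ∀ β ∈ Δ.Rpos, ∀ c : V → ℕ,
    β = ∑ α ∈ Δ.S, (c α : ℝ) • α → (∑ α ∈ Δ.S, c α) = n →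
    sroot β ∈ WS Δ ∧ ∃ w ∈ WS Δ, ∃ α ∈ Δ.S, β = w α := by
  intro n
  induction n using Nat.strong_induction_on with
  | _ n ihn =>
  intro β hβ c hc hn
  by_cases hβS : β ∈ Δ.S
  · exact ⟨sroot_mem_WS hβS, 1, one_mem _, β, hβS, rfl⟩
  · have hβR : β ∈ Δ.R := Rpos_subset_R hβ
    have hex : ∃ α₀ ∈ Δ.S, 0 < ⟪β, α₀⟫_ℝ := by
      by_contra hcon
      push_neg at hcon
      have hpos : 0 < ⟪β, β⟫_ℝ := inner_root_pos hβR
      have hle : ⟪β, β⟫_ℝ ≤ 0 := by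
        conv_lhs => rw [show ⟪β, β⟫_ℝ = ⟪β, ∑ α ∈ Δ.S, (c α : ℝ) • α⟫_ℝ by rw [← hc]]
        rw [inner_sum]
        apply Finset.sum_nonpos
        intro α hα
        rw [real_inner_smul_right]
        exact mul_nonpos_of_nonneg_of_nonpos (Nat.cast_nonneg _) (hcon α hα)
      linarith
    obtain ⟨α₀, hα₀S, hα₀⟩ := hex
    have hne : β ≠ α₀ := fun h => hβS (h ▸ hα₀S)
    have hα₀R : α₀ ∈ Δ.R := Δ.base_sub hα₀S
    obtain ⟨k, hk⟩ := Δ.crystallographic α₀ hα₀R β hβR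
    have hk1 : 1 ≤ k := by
      have hkpos : (0:ℝ) < (k:ℝ) := by
        rw [← hk]
        apply div_pos (by linarith) (inner_root_pos hα₀R)
      have : 0 < k := by exact_mod_cast hkpos
      omega
    have hβ'pos : sroot α₀ β ∈ Δ.Rpos := (sroot_simple_perm hα₀S hβ hne).1
    obtain ⟨hβ'R, d, hd⟩ := mem_Rpos_iff.mp hβ'pos
    have hexpr := sroot_expr (Δ := Δ) hα₀S c k hc hk
    have hcoe : ∀ γ ∈ Δ.S, (d γ : ℝ) = (c γ : ℝ) - (k:ℝ) * (if γ = α₀ then 1 else 0) :=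
      coeff_unique (Δ := Δ) (by rw [← hd, hexpr])
    set m := ∑ γ ∈ Δ.S, d γ with hm
    have hmval : (m:ℝ) = (n:ℝ) - (k:ℝ) := by
      have h1 : (m:ℝ) = ∑ γ ∈ Δ.S, (d γ : ℝ) := by push_cast [hm]; ring
      rw [h1, Finset.sum_congr rfl hcoe, Finset.sum_sub_distrib]
      have h2 : ∑ γ ∈ Δ.S, (k:ℝ) * (if γ = α₀ then 1 else 0) = (k:ℝ) := by
        rw [← Finset.mul_sum]
        have : ∀ γ ∈ Δ.S, (if γ = α₀ then (1:ℝ) else 0) = if γ = α₀ then 1 else 0 :=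
          fun _ _ => rfl
        rw [Finset.sum_ite_eq' Δ.S α₀ (fun _ => (1:ℝ)), if_pos hα₀S, mul_one]
      rw [h2]
      have h3 : (∑ γ ∈ Δ.S, (c γ : ℝ)) = (n:ℝ) := by
        rw [← hn]; push_cast; ring
      rw [h3]
    have hmn : m < n := by
      have : (m:ℝ) < (n:ℝ) := by
        rw [hmval]
        have : (1:ℝ) ≤ (k:ℝ) := by exact_mod_cast hk1
        linarith
      exact_mod_cast this
    obtain ⟨hWS', w', hw', α', hα', hβ'eq⟩ := ihn m hmn (sroot α₀ β) hβ'pos d hd rfl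
    have hβeq : β = sroot α₀ (sroot α₀ β) := (reflLM_involutive α₀ β).symm
    constructor
    · have hconj : sroot (sroot α₀ β) = sroot α₀ * sroot β * (sroot α₀)⁻¹ :=
        sroot_conj (sroot_mem_weyl Δ hα₀R) β
      have h2 : sroot α₀ * sroot (sroot α₀ β) * sroot α₀ = sroot β := by
        rw [hconj, sroot_inv]
        calc sroot α₀ * (sroot α₀ * sroot β * sroot α₀) * sroot α₀
            = (sroot α₀ * sroot α₀) * sroot β * (sroot α₀ * sroot α₀) := by group
          _ = sroot β := by rw [sroot_mul_self]; group
      rw [← h2]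
      exact mul_mem (mul_mem (sroot_mem_WS hα₀S) hWS') (sroot_mem_WS hα₀S)
    · refine ⟨sroot α₀ * w', mul_mem (sroot_mem_WS hα₀S) hw', α', hα', ?_⟩
      rw [mul_apply, ← hβ'eq, ← hβeq]

/-- The key exchange step. -/
lemma exch : ∀ (l : List V), (∀ γ ∈ l, γ ∈ Δ.S) → ∀ (α : V), α ∈ Δ.Rpos →
    (prodRefl l) α ∈ Δ.Rneg →
    ∃ l' : List V, (∀ γ ∈ l', γ ∈ Δ.S) ∧ l'.length + 1 = l.length ∧
      prodRefl l * sroot α = prodRefl l' := by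
  intro l
  induction l with
  | nil =>
    intro _ α hα hneg
    simp only [prodRefl_nil] at hneg
    exact absurd (not_pos_and_neg hα hneg) (by simp)
  | cons β t ih =>
    intro hl α hα hneg
    have hβS : β ∈ Δ.S := hl β (List.mem_cons_self)
    have ht : ∀ γ ∈ t, γ ∈ Δ.S := fun γ hγ => hl γ (List.mem_cons_of_mem β hγ)
    have happ : prodRefl (β :: t) α = prodRefl t (sroot β α) := rfl
    by_cases hcase : α = β
    · -- the first reflection already kills α
      subst hcase
      refine ⟨t, ht, rfl, ?_⟩
      rw [prodRefl_cons, mul_assoc, sroot_mul_self, mul_one]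
    · have hpos : sroot β α ∈ Δ.Rpos := (sroot_simple_perm hβS hα hcase).1
      have hneg' : prodRefl t (sroot β α) ∈ Δ.Rneg := by rwa [happ] at hneg
      obtain ⟨t', ht', hlen, heq⟩ := ih ht (sroot β α) hpos hneg'
      refine ⟨β :: t', fun γ hγ => ?_, by simp [← hlen], ?_⟩
      · rcases List.mem_cons.mp hγ with h | h
        · rw [h]; exact hβS
        · exact ht' γ h
      · -- prodRefl (β::t) * sroot α = prodRefl (β::t')
        have hconj : sroot (sroot β α) = sroot β * sroot α * (sroot β)⁻¹ :=
          sroot_conj (sroot_mem_weyl Δ (Δ.base_sub hβS)) α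
        rw [sroot_inv] at hconj
        have hkey : sroot β * sroot α = sroot (sroot β α) * sroot β := by
          rw [hconj, mul_assoc, mul_assoc, sroot_mul_self, mul_one]
        rw [prodRefl_cons, prodRefl_cons, mul_assoc, hkey, ← mul_assoc, heq]


lemma WS_le_weyl : WS Δ ≤ Δ.Weyl := by
  apply Subgroup.closure_le Δ.Weyl |>.mpr
  rintro g ⟨α, hα, rfl⟩
  exact sroot_mem_weyl Δ (Δ.base_sub hα)

lemma weyl_le_WS : Δ.Weyl ≤ WS Δ := by
  rw [Weyl]
  apply Subgroup.closure_le (WS Δ) |>.mpr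
  rintro g hg
  obtain ⟨γ, hγ, rfl⟩ := weyl_gen_eq_sroot hg
  rcases root_pos_or_neg (Δ := Δ) hγ with h | h
  · obtain ⟨-, cc, hcc⟩ := mem_Rpos_iff.mp h
    exact (pos_root_reachable (Δ := Δ) (∑ γ' ∈ Δ.S, cc γ') γ h cc hcc rfl).1
  · have h2 : -γ ∈ Δ.Rpos := mem_Rneg_iff.mp h
    obtain ⟨-, cc, hcc⟩ := mem_Rpos_iff.mp h2
    have := (pos_root_reachable (Δ := Δ) (∑ γ' ∈ Δ.S, cc γ') (-γ) h2 cc hcc rfl).1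
    rwa [sroot_neg] at this

/-- An element of the Weyl group preserving the positive roots is trivial. -/
lemma weyl_fix_pos {u : V ≃ₗ[ℝ] V} (hu : u ∈ Δ.Weyl)
    (hpos : ∀ β ∈ Δ.Rpos, u β ∈ Δ.Rpos) : u = 1 := by
  -- W is generated by simple reflections
  have huWS : u ∈ WS Δ := weyl_le_WS hu
  obtain ⟨l, hl, rfl⟩ := exists_word_of_WS huWS
  clear hu huWS
  -- strong induction on the length of the word
  have main : ∀ (n : ℕ) (l : List V), l.length ≤ n → (∀ γ ∈ l, γ ∈ Δ.S) →
      (∀ β ∈ Δ.Rpos, (prodRefl l) β ∈ Δ.Rpos) → prodRefl l = 1 := by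
    intro n
    induction n with
    | zero =>
      intro l hlen _ _
      have : l = [] := List.length_eq_zero_iff.mp (Nat.le_zero.mp hlen)
      rw [this]; rfl
    | succ m ihm =>
      intro l hlen hl hpos
      match l with
      | [] => rfl
      | β :: t =>
        have hβS : β ∈ Δ.S := hl β (List.mem_cons_self)
        have ht : ∀ γ ∈ t, γ ∈ Δ.S := fun γ hγ => hl γ (List.mem_cons_of_mem β hγ)
        have hβpos : β ∈ Δ.Rpos := simple_mem_Rpos hβS
        rcases root_pos_or_neg (Δ := Δ)
            (weyl_maps_R (prodRefl_mem_weyl (fun γ hγ => Δ.base_sub (ht γ hγ)))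
              (Δ.base_sub hβS)) with hc | hc
        · -- prodRefl t β positive: contradiction with hpos β
          exfalso
          have h1 : prodRefl (β :: t) β = prodRefl t (sroot β β) := rfl
          rw [sroot_apply_self (root_ne_zero (Δ.base_sub hβS)), map_neg] at h1
          have h2 : prodRefl (β :: t) β ∈ Δ.Rneg := by
            rw [h1, mem_Rneg_iff, neg_neg]
            exact hc
          exact not_pos_and_neg (hpos β hβpos) h2
        · -- exchange
          obtain ⟨t', ht', hlen', heq⟩ := exch t ht β hβpos hc
          have hps : prodRefl (β :: t) = prodRefl t' := by
            rw [prodRefl_cons, heq]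
          rw [hps]
          apply ihm t' _ ht'
          · intro γ hγ
            rw [← hps]
            exact hpos γ hγ
          · have : t.length ≤ m := by
              have := hlen
              simp only [List.length_cons] at this
              omega
            omega
  exact main l.length l le_rfl hl hpos

/-- An element of the Weyl group fixing (strictly) the dominant chamber is trivial. -/
lemma strict_dom_unique {u : V ≃ₗ[ℝ] V} (hu : u ∈ Δ.Weyl) {κ : V}
    (h1 : ∀ α ∈ Δ.S, 0 < ⟪κ, α⟫_ℝ) (h2 : ∀ α ∈ Δ.S, 0 < ⟪u κ, α⟫_ℝ) : u = 1 := by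
  apply weyl_fix_pos hu
  intro β hβ
  rcases root_pos_or_neg (Δ := Δ) (weyl_maps_R hu (Rpos_subset_R hβ)) with h | h
  · exact h
  · exfalso
    have h3 : -(u β) ∈ Δ.Rpos := mem_Rneg_iff.mp h
    have h4 : 0 < ⟪u κ, -(u β)⟫_ℝ := dom_inner_pos h2 h3
    rw [inner_neg_right, neg_pos, weyl_inner hu] at h4
    exact absurd (dom_inner_pos h1 hβ) (not_lt.mpr (le_of_lt h4))

end Words

section Dominance

/-- Existence of a dominant representative in each Weyl orbit. -/
lemma exists_dominant_rep (κ : V) : ∃ u ∈ Δ.Weyl, ∀ α ∈ Δ.S, 0 ≤ ⟪u κ, α⟫_ℝ := by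
  have hWfin := weyl_finite (Δ := Δ)
  have h1 : (1 : V ≃ₗ[ℝ] V) ∈ hWfin.toFinset := by
    rw [Set.Finite.mem_toFinset]
    exact one_mem _
  obtain ⟨w₀, hw₀mem, hmax⟩ :=
    Finset.exists_max_image hWfin.toFinset (fun w => ⟪w κ, Δ.rho⟫_ℝ) ⟨1, h1⟩
  have hw₀ : w₀ ∈ Δ.Weyl := (Set.Finite.mem_toFinset hWfin).mp hw₀mem
  refine ⟨w₀, hw₀, ?_⟩
  intro α hα
  have hs : sroot α * w₀ ∈ hWfin.toFinset := (Set.Finite.mem_toFinset hWfin).mpr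
    (mul_mem (sroot_mem_weyl Δ (Δ.base_sub hα)) hw₀)
  have hle := hmax _ hs
  have key : ⟪(sroot α * w₀) κ, Δ.rho⟫_ℝ = ⟪w₀ κ, Δ.rho⟫_ℝ - ⟪w₀ κ, α⟫_ℝ := by
    rw [mul_apply]
    have h2 : ⟪sroot α (w₀ κ), Δ.rho⟫_ℝ = ⟪w₀ κ, sroot α Δ.rho⟫_ℝ := by
      conv_lhs => rw [show Δ.rho = sroot α (sroot α Δ.rho) from (reflLM_involutive α _).symm]
      rw [sroot_inner]
    rw [h2, sroot_rho hα, inner_sub_right]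
  rw [key] at hle
  linarith

lemma weyl_maps_Q {w : V ≃ₗ[ℝ] V} (hw : w ∈ Δ.Weyl) {q : V} (hq : q ∈ Δ.Qlat) :
    w q ∈ Δ.Qlat := by
  induction hq using AddSubgroup.closure_induction with
  | mem x hx => exact AddSubgroup.subset_closure (weyl_maps_R hw hx)
  | zero => simpa using zero_mem Δ.Qlat
  | add x y _ _ hx hy => rw [map_add]; exact add_mem hx hy
  | neg x _ hx => rw [map_neg]; exact neg_mem hx

lemma rho_sub_weyl_mem_Q {w : V ≃ₗ[ℝ] V} (hw : w ∈ Δ.Weyl) :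
    Δ.rho - w Δ.rho ∈ Δ.Qlat := by
  obtain ⟨l, hl, rfl⟩ := exists_word_of_WS (weyl_le_WS hw)
  clear hw
  induction l with
  | nil => simpa using zero_mem Δ.Qlat
  | cons β t ih =>
    have hβS : β ∈ Δ.S := hl β (List.mem_cons_self)
    have ht : ∀ γ ∈ t, γ ∈ Δ.S := fun γ hγ => hl γ (List.mem_cons_of_mem β hγ)
    have hstep : prodRefl (β :: t) Δ.rho = prodRefl t Δ.rho - prodRefl t β := by
      have : prodRefl (β :: t) Δ.rho = prodRefl t (sroot β Δ.rho) := rfl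
      rw [this, sroot_rho hβS, map_sub]
    rw [hstep]
    have h1 := ih ht
    have h2 : prodRefl t β ∈ Δ.Qlat :=
      AddSubgroup.subset_closure
        (weyl_maps_R (prodRefl_mem_weyl fun γ hγ => Δ.base_sub (ht γ hγ)) (Δ.base_sub hβS))
    have := add_mem h1 h2
    have heq : Δ.rho - (prodRefl t Δ.rho - prodRefl t β)
        = (Δ.rho - prodRefl t Δ.rho) + prodRefl t β := by abel
    rwa [heq]

lemma weight_add {μ ν : V} (hμ : Δ.IsWeight μ) (hν : Δ.IsWeight ν) :
    Δ.IsWeight (μ + ν) := by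
  intro α hα
  obtain ⟨n, hn⟩ := hμ α hα
  obtain ⟨m, hm⟩ := hν α hα
  refine ⟨n + m, ?_⟩
  rw [inner_add_left]
  push_cast
  rw [← hn, ← hm]
  ring

lemma weight_neg {μ : V} (hμ : Δ.IsWeight μ) : Δ.IsWeight (-μ) := by
  intro α hα
  obtain ⟨n, hn⟩ := hμ α hα
  refine ⟨-n, ?_⟩
  rw [inner_neg_left]
  push_cast
  rw [← hn]
  ring

lemma weight_sub {μ ν : V} (hμ : Δ.IsWeight μ) (hν : Δ.IsWeight ν) :
    Δ.IsWeight (μ - ν) := by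
  rw [sub_eq_add_neg]
  exact weight_add hμ (weight_neg hν)

lemma weight_weyl {μ : V} (hμ : Δ.IsWeight μ) {w : V ≃ₗ[ℝ] V} (hw : w ∈ Δ.Weyl) :
    Δ.IsWeight (w μ) := by
  intro α hα
  have hα' : w⁻¹ α ∈ Δ.R := weyl_maps_R (inv_mem hw) hα
  obtain ⟨n, hn⟩ := hμ (w⁻¹ α) hα'
  refine ⟨n, ?_⟩
  have e1 : ⟪w μ, α⟫_ℝ = ⟪μ, w⁻¹ α⟫_ℝ := by
    conv_lhs => rw [show α = w (w⁻¹ α) from (inv_apply_eq w α).symm]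
    rw [weyl_inner hw]
  have e2 : ⟪α, α⟫_ℝ = ⟪w⁻¹ α, w⁻¹ α⟫_ℝ := by
    conv_lhs => rw [show α = w (w⁻¹ α) from (inv_apply_eq w α).symm]
    rw [weyl_inner hw]
  rw [e1, e2, hn]

lemma weight_Q {q : V} (hq : q ∈ Δ.Qlat) : Δ.IsWeight q := by
  induction hq using AddSubgroup.closure_induction with
  | mem x hx => intro α hα; exact Δ.crystallographic α hα x hx
  | zero =>
    intro α hα
    refine ⟨0, ?_⟩
    simp
  | add x y _ _ hx hy => exact weight_add hx hy
  | neg x _ hx => exact weight_neg hx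

lemma rho_weight : Δ.IsWeight Δ.rho := by
  have hpos : ∀ β ∈ Δ.Rpos, ∃ n : ℤ, 2 * ⟪Δ.rho, β⟫_ℝ / ⟪β, β⟫_ℝ = (n : ℝ) := by
    intro β hβ
    obtain ⟨hβR, cc, hcc⟩ := mem_Rpos_iff.mp hβ
    obtain ⟨-, w, hwWS, γ, hγS, hβeq⟩ :=
      pos_root_reachable (Δ := Δ) (∑ γ' ∈ Δ.S, cc γ') β hβ cc hcc rfl
    have hwW : w ∈ Δ.Weyl := WS_le_weyl hwWS
    have hγR : γ ∈ Δ.R := Δ.base_sub hγS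
    have hqQ : Δ.rho - w⁻¹ Δ.rho ∈ Δ.Qlat := rho_sub_weyl_mem_Q (inv_mem hwW)
    obtain ⟨nq, hnq⟩ := weight_Q hqQ γ hγR
    refine ⟨1 - nq, ?_⟩
    have e1 : ⟪Δ.rho, β⟫_ℝ = ⟪w⁻¹ Δ.rho, γ⟫_ℝ := by
      rw [hβeq]
      conv_lhs => rw [show Δ.rho = w (w⁻¹ Δ.rho) from (inv_apply_eq w _).symm]
      rw [weyl_inner hwW]
    have e2 : ⟪β, β⟫_ℝ = ⟪γ, γ⟫_ℝ := by
      rw [hβeq, weyl_inner hwW]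
    have e3 : ⟪w⁻¹ Δ.rho, γ⟫_ℝ = ⟪Δ.rho, γ⟫_ℝ - ⟪Δ.rho - w⁻¹ Δ.rho, γ⟫_ℝ := by
      rw [inner_sub_left]; ring
    have e4 := pair_rho_simple (Δ := Δ) hγS
    rw [e1, e2, e3]
    push_cast
    rw [show 2 * (⟪Δ.rho, γ⟫_ℝ - ⟪Δ.rho - w⁻¹ Δ.rho, γ⟫_ℝ) / ⟪γ, γ⟫_ℝ
        = 2 * ⟪Δ.rho, γ⟫_ℝ / ⟪γ, γ⟫_ℝ - 2 * ⟪Δ.rho - w⁻¹ Δ.rho, γ⟫_ℝ / ⟪γ, γ⟫_ℝ by ring]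
    rw [e4, hnq]
  intro α hα
  rcases root_pos_or_neg (Δ := Δ) hα with h | h
  · exact hpos α h
  · obtain ⟨n, hn⟩ := hpos (-α) (mem_Rneg_iff.mp h)
    refine ⟨-n, ?_⟩
    rw [inner_neg_right, inner_neg_neg] at hn
    push_cast
    rw [← hn]
    ring

end Dominance

end WeylBasic
section MainDefs

variable (Δ : RootSystemWithBase V)

/-- The Weyl group as a finset. -/
noncomputable def Wfin : Finset (V ≃ₗ[ℝ] V) := (weyl_finite (Δ := Δ)).toFinset

variable {Δ}

lemma mem_Wfin {w : V ≃ₗ[ℝ] V} : w ∈ Wfin Δ ↔ w ∈ Δ.Weyl := Set.Finite.mem_toFinset _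

lemma coe_Wfin : (↑(Wfin Δ) : Set (V ≃ₗ[ℝ] V)) = (Δ.Weyl : Set (V ≃ₗ[ℝ] V)) :=
  Set.Finite.coe_toFinset _

variable (Δ)

/-- The orbit of `lam` as a finset. -/
noncomputable def Ofin (lam : V) : Finset V := (Wfin Δ).image (fun w => w lam)

/-- The alternating sum `A_κ = ∑_w ε(w) e^{wκ}`. -/
noncomputable def AA (ε : (V ≃ₗ[ℝ] V) → ℤ) (κ : V) : AddMonoidAlgebra ℤ V :=
  ∑ w ∈ Wfin Δ, ε w • expo (w κ)

/-- The coefficient function `L(κ) = ∑_{φ ∈ Wlam} ∑_w ε(w) δ(φ + wρ, κ)`. -/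
noncomputable def LL (ε : (V ≃ₗ[ℝ] V) → ℤ) (lam κ : V) : ℤ :=
  ∑ φ ∈ Ofin Δ lam, ∑ w ∈ Wfin Δ, ε w * (if φ + w Δ.rho = κ then 1 else 0)

variable {Δ}

lemma coe_Ofin (lam : V) : (↑(Ofin Δ lam) : Set V) = Δ.orbit lam := by
  rw [Ofin, Finset.coe_image, coe_Wfin, orbit]

lemma mem_Ofin {lam φ : V} : φ ∈ Ofin Δ lam ↔ ∃ x ∈ Δ.Weyl, x lam = φ := by
  rw [Ofin, Finset.mem_image]
  constructor
  · rintro ⟨x, hx, rfl⟩; exact ⟨x, mem_Wfin.mp hx, rfl⟩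
  · rintro ⟨x, hx, rfl⟩; exact ⟨x, mem_Wfin.mpr hx, rfl⟩

lemma expo_apply (ν κ : V) : (expo ν : AddMonoidAlgebra ℤ V).coeff κ = if ν = κ then 1 else 0 :=
  Finsupp.single_apply

lemma AA_coeff (ε : (V ≃ₗ[ℝ] V) → ℤ) (μ κ : V) :
    (AA Δ ε μ).coeff κ = ∑ v ∈ Wfin Δ, ε v * (if v μ = κ then 1 else 0) := by
  rw [AA, AddMonoidAlgebra.coeff_sum, Finset.sum_apply']
  apply Finset.sum_congr rfl
  intro v _
  rw [AddMonoidAlgebra.coeff_smul_apply, expo_apply, smul_eq_mul]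

lemma Eorb_eq (lam : V) : Δ.Eorb lam = ∑ φ ∈ Ofin Δ lam, expo φ := by
  rw [Eorb, ← coe_Ofin lam, finsum_mem_coe_finset]

lemma ED_coeff (ε : (V ≃ₗ[ℝ] V) → ℤ) (lam κ : V) :
    ((∑ φ ∈ Ofin Δ lam, expo φ) * AA Δ ε Δ.rho).coeff κ = LL Δ ε lam κ := by
  rw [AA, Finset.sum_mul_sum, LL]
  rw [AddMonoidAlgebra.coeff_sum, Finset.sum_apply']
  apply Finset.sum_congr rfl
  intro φ _
  rw [AddMonoidAlgebra.coeff_sum, Finset.sum_apply']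
  apply Finset.sum_congr rfl
  intro w _
  rw [mul_smul_comm]
  have : expo φ * expo (w Δ.rho) = expo (φ + w Δ.rho) := by
    rw [expo, expo, expo, AddMonoidAlgebra.single_mul_single, mul_one]
  rw [this, AddMonoidAlgebra.coeff_smul_apply, expo_apply, smul_eq_mul]

end MainDefs

section MainLemmas

variable {Δ : RootSystemWithBase V} {ε : (V ≃ₗ[ℝ] V) → ℤ}
variable (hε : ∀ w ∈ Δ.Weyl, ((ε w : ℤ) : ℝ) = LinearMap.det ((w : V ≃ₗ[ℝ] V) : V →ₗ[ℝ] V))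

include hε

/-- Cancellation of a signed indicator sum at a singular point. -/
lemma sum_sign_ite_singular {κ β : V} (hβ : β ∈ Δ.R) (h0 : ⟪κ, β⟫_ℝ = 0) (μ : V) :
    ∑ v ∈ Wfin Δ, ε v * (if v μ = κ then 1 else 0) = 0 := by
  have hsW : sroot β ∈ Δ.Weyl := sroot_mem_weyl Δ hβ
  have hsκ : sroot β κ = κ := sroot_apply_perp h0
  apply Finset.sum_involution (fun v _ => sroot β * v)
  · intro v hv
    have hvW : v ∈ Δ.Weyl := mem_Wfin.mp hv
    have heps : ε (sroot β * v) = -ε v := by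
      rw [eps_mul ε hε hsW hvW, eps_sroot ε hε hβ]
      ring
    have hite : ((sroot β * v) μ = κ) ↔ (v μ = κ) := by
      constructor
      · intro h
        have := congrArg (fun z => sroot β z) h
        rw [← mul_apply, ← mul_assoc, sroot_mul_self, one_mul, hsκ] at this
        exact this
      · intro h
        rw [mul_apply, h, hsκ]
    rw [heps]
    by_cases h : v μ = κ
    · rw [if_pos h, if_pos (hite.mpr h)]; ring
    · rw [if_neg h, if_neg (fun hh => h (hite.mp hh))]; ring
  · intro v hv _
    intro hcon
    have : sroot β = 1 := by
      have := congrArg (fun z => z * v⁻¹) hcon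
      simpa [mul_assoc] using this
    have hββ := congrArg (fun z : V ≃ₗ[ℝ] V => z β) this
    rw [sroot_apply_self (root_ne_zero hβ)] at hββ
    have hzero : β = 0 := by
      have h1 : (1 : V ≃ₗ[ℝ] V) β = β := rfl
      rw [h1] at hββ
      have h2 : (2:ℝ) • β = 0 := by
        rw [two_smul]
        nth_rewrite 1 [← hββ]
        exact neg_add_cancel β
      rcases smul_eq_zero.mp h2 with h | h
      · norm_num at h
      · exact h
    exact root_ne_zero hβ hzero
  · intro v hv
    exact mem_Wfin.mpr (mul_mem hsW (mem_Wfin.mp hv))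
  · intro v hv
    rw [← mul_assoc, sroot_mul_self, one_mul]

/-- Cancellation of `L` at a singular point. -/
lemma LL_singular {lam κ β : V} (hβ : β ∈ Δ.R) (h0 : ⟪κ, β⟫_ℝ = 0) :
    LL Δ ε lam κ = 0 := by
  rw [LL]
  have hsW : sroot β ∈ Δ.Weyl := sroot_mem_weyl Δ hβ
  have hsκ : sroot β κ = κ := sroot_apply_perp h0
  rw [← Finset.sum_product']
  apply Finset.sum_involution (fun p _ => (sroot β p.1, sroot β * p.2))
  · rintro ⟨φ, w⟩ hp
    simp only [Finset.mem_product] at hp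
    have hwW : w ∈ Δ.Weyl := mem_Wfin.mp hp.2
    have heps : ε (sroot β * w) = -ε w := by
      rw [eps_mul ε hε hsW hwW, eps_sroot ε hε hβ]
      ring
    have hite : (sroot β φ + (sroot β * w) Δ.rho = κ) ↔ (φ + w Δ.rho = κ) := by
      have hlin : sroot β φ + (sroot β * w) Δ.rho = sroot β (φ + w Δ.rho) := by
        rw [mul_apply, map_add]
      rw [hlin]
      constructor
      · intro h
        have := congrArg (fun z => sroot β z) h
        rw [sroot_sroot, hsκ] at this
        exact this
      · intro h
        rw [h, hsκ]
    simp only [heps]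
    by_cases h : φ + w Δ.rho = κ
    · rw [if_pos h, if_pos (hite.mpr h)]; ring
    · rw [if_neg h, if_neg (fun hh => h (hite.mp hh))]; ring
  · rintro ⟨φ, w⟩ hp _
    intro hcon
    have hcon2 : sroot β * w = w := congrArg Prod.snd hcon
    have : sroot β = 1 := by
      have := congrArg (fun z => z * w⁻¹) hcon2
      simpa [mul_assoc] using this
    have hββ := congrArg (fun z : V ≃ₗ[ℝ] V => z β) this
    rw [sroot_apply_self (root_ne_zero hβ)] at hββ
    have hzero : β = 0 := by
      have h1 : (1 : V ≃ₗ[ℝ] V) β = β := rfl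
      rw [h1] at hββ
      have h2 : (2:ℝ) • β = 0 := by
        rw [two_smul]
        nth_rewrite 1 [← hββ]
        exact neg_add_cancel β
      rcases smul_eq_zero.mp h2 with h | h
      · norm_num at h
      · exact h
    exact root_ne_zero hβ hzero
  · rintro ⟨φ, w⟩ hp
    simp only [Finset.mem_product] at hp ⊢
    obtain ⟨x, hx, rfl⟩ := mem_Ofin.mp hp.1
    constructor
    · exact mem_Ofin.mpr ⟨sroot β * x, mul_mem hsW hx, rfl⟩
    · exact mem_Wfin.mpr (mul_mem hsW (mem_Wfin.mp hp.2))
  · rintro ⟨φ, w⟩ hp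
    have h1 : sroot β (sroot β φ) = φ := reflLM_involutive β φ
    have h2 : sroot β * (sroot β * w) = w := by
      rw [← mul_assoc, sroot_mul_self, one_mul]
    simp [h1, h2]

/-- Equivariance of `L`. -/
lemma LL_equivariant {lam κ : V} {u : V ≃ₗ[ℝ] V} (hu : u ∈ Δ.Weyl) :
    LL Δ ε lam (u κ) = ε u * LL Δ ε lam κ := by
  rw [LL, LL, ← Finset.sum_product', ← Finset.sum_product', Finset.mul_sum]
  apply Finset.sum_nbij' (fun p => (u⁻¹ p.1, u⁻¹ * p.2)) (fun p => (u p.1, u * p.2))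
  · rintro ⟨φ, w⟩ hp
    simp only [Finset.mem_product] at hp ⊢
    obtain ⟨x, hx, rfl⟩ := mem_Ofin.mp hp.1
    exact ⟨mem_Ofin.mpr ⟨u⁻¹ * x, mul_mem (inv_mem hu) hx, rfl⟩,
      mem_Wfin.mpr (mul_mem (inv_mem hu) (mem_Wfin.mp hp.2))⟩
  · rintro ⟨φ, w⟩ hp
    simp only [Finset.mem_product] at hp ⊢
    obtain ⟨x, hx, rfl⟩ := mem_Ofin.mp hp.1
    exact ⟨mem_Ofin.mpr ⟨u * x, mul_mem hu hx, rfl⟩,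
      mem_Wfin.mpr (mul_mem hu (mem_Wfin.mp hp.2))⟩
  · rintro ⟨φ, w⟩ _
    simp [← mul_assoc, mul_inv_cancel, inv_apply_eq]
  · rintro ⟨φ, w⟩ _
    simp [← mul_assoc, inv_mul_cancel, inv_apply_eq']
  · rintro ⟨φ, w⟩ hp
    simp only [Finset.mem_product] at hp
    have hwW : w ∈ Δ.Weyl := mem_Wfin.mp hp.2
    have heps : ε (u⁻¹ * w) = ε u * ε w := by
      rw [eps_mul ε hε (inv_mem hu) hwW, eps_inv ε hε hu]
    have hite : (u⁻¹ φ + (u⁻¹ * w) Δ.rho = κ) ↔ (φ + w Δ.rho = u κ) := by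
      have hlin : u⁻¹ φ + (u⁻¹ * w) Δ.rho = u⁻¹ (φ + w Δ.rho) := by
        rw [mul_apply, map_add]
      rw [hlin]
      constructor
      · intro h
        have := congrArg (fun z => u z) h
        simpa only [inv_apply_eq] using this
      · intro h
        rw [h, inv_apply_eq']
    rw [heps]
    by_cases h : φ + w Δ.rho = u κ
    · rw [if_pos h, if_pos (hite.mpr h)]
      have h2 : ε u * ε u = 1 := eps_mul_self ε hε hu
      linear_combination (-(ε w)) * h2
    · rw [if_neg h, if_neg (fun hh => h (hite.mp hh)), mul_zero, mul_zero, mul_zero]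

/-- The diagonal coefficient of `A_κ` at a strictly dominant `κ` is `1`. -/
lemma AA_coeff_diag {κ : V} (hκ : ∀ α ∈ Δ.S, 0 < ⟪κ, α⟫_ℝ) :
    (AA Δ ε κ).coeff κ = 1 := by
  rw [AA_coeff]
  rw [Finset.sum_eq_single (1 : V ≃ₗ[ℝ] V)]
  · rw [eps_one ε hε]
    simp
  · intro v hv hne
    have hvW : v ∈ Δ.Weyl := mem_Wfin.mp hv
    rw [if_neg, mul_zero]
    intro h
    apply hne
    apply strict_dom_unique hvW hκ
    intro α hα
    rw [h]
    exact hκ α hα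
  · intro h
    exact absurd (mem_Wfin.mpr (one_mem _)) h

lemma Minv_eq (lam μ : V) :
    Δ.Minv ε lam μ = ((LL Δ ε lam (μ + Δ.rho) : ℤ) : ℚ) := by
  classical
  have h1 : ∀ (G : (V ≃ₗ[ℝ] V) → ℚ),
      ∑ᶠ w ∈ (Δ.Weyl : Set (V ≃ₗ[ℝ] V)), G w = ∑ w ∈ Wfin Δ, G w := fun G => by
    rw [← coe_Wfin, finsum_mem_coe_finset]
  have hstep1 : Δ.Minv ε lam μ =
      (((Δ.orbit lam).ncard : ℚ) / (((Δ.Weyl : Set (V ≃ₗ[ℝ] V)).ncard : ℚ))) *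
      ∑ x ∈ Wfin Δ, ∑ w ∈ Wfin Δ,
        (ε w : ℚ) * (if x lam + w Δ.rho = μ + Δ.rho then (1:ℚ) else 0) := by
    rw [Minv, h1]
    congr 1
    apply Finset.sum_congr rfl
    intro x _
    rw [h1]
  rw [hstep1]
  set g : V → ℚ :=
    fun φ => ∑ w ∈ Wfin Δ, (ε w : ℚ) * (if φ + w Δ.rho = μ + Δ.rho then (1:ℚ) else 0)
    with hg
  have hmaps : ∀ x ∈ Wfin Δ, x lam ∈ Ofin Δ lam := by
    intro x hx
    exact Finset.mem_image_of_mem _ hx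
  set Stab := (Wfin Δ).filter (fun x => x lam = lam) with hStab
  have hfib : ∀ φ ∈ Ofin Δ lam,
      ((Wfin Δ).filter (fun x => x lam = φ)).card = Stab.card := by
    intro φ hφ
    obtain ⟨x₀, hx₀, rfl⟩ := Finset.mem_image.mp hφ
    apply Finset.card_bij' (fun x _ => x₀⁻¹ * x) (fun y _ => x₀ * y)
    · intro x hx
      obtain ⟨hx1, hx2⟩ := Finset.mem_filter.mp hx
      refine Finset.mem_filter.mpr ⟨mem_Wfin.mpr (mul_mem (inv_mem (mem_Wfin.mp hx₀)) (mem_Wfin.mp hx1)), ?_⟩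
      rw [mul_apply, hx2, inv_apply_eq']
    · intro y hy
      obtain ⟨hy1, hy2⟩ := Finset.mem_filter.mp hy
      refine Finset.mem_filter.mpr ⟨mem_Wfin.mpr (mul_mem (mem_Wfin.mp hx₀) (mem_Wfin.mp hy1)), ?_⟩
      rw [mul_apply, hy2]
    · intro x hx
      rw [← mul_assoc, mul_inv_cancel, one_mul]
    · intro y hy
      rw [← mul_assoc, inv_mul_cancel, one_mul]
  have hregroup : ∑ x ∈ Wfin Δ, g (x lam)
      = ∑ φ ∈ Ofin Δ lam, (Stab.card : ℚ) * g φ := by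
    rw [← Finset.sum_fiberwise_of_maps_to hmaps (fun x => g (x lam))]
    apply Finset.sum_congr rfl
    intro φ hφ
    have : ∀ x ∈ (Wfin Δ).filter (fun x => x lam = φ), g (x lam) = g φ := by
      intro x hx
      rw [(Finset.mem_filter.mp hx).2]
    rw [Finset.sum_congr rfl this, Finset.sum_const, hfib φ hφ, nsmul_eq_mul]
  have hcard : (Wfin Δ).card = (Ofin Δ lam).card * Stab.card := by
    rw [Finset.card_eq_sum_card_fiberwise hmaps]
    rw [Finset.sum_congr rfl hfib, Finset.sum_const, smul_eq_mul]
  have hO : ((Δ.orbit lam).ncard : ℚ) = ((Ofin Δ lam).card : ℚ) := by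
    rw [← coe_Ofin, Set.ncard_coe_finset]
  have hW : (((Δ.Weyl : Set (V ≃ₗ[ℝ] V)).ncard : ℚ)) = ((Wfin Δ).card : ℚ) := by
    rw [← coe_Wfin, Set.ncard_coe_finset]
  have hWne : ((Wfin Δ).card : ℚ) ≠ 0 := by
    have h0 : (1 : V ≃ₗ[ℝ] V) ∈ Wfin Δ := mem_Wfin.mpr (one_mem _)
    exact Nat.cast_ne_zero.mpr (Finset.card_ne_zero_of_mem h0)
  have hbody : (∑ x ∈ Wfin Δ, ∑ w ∈ Wfin Δ,
      (ε w : ℚ) * (if x lam + w Δ.rho = μ + Δ.rho then (1:ℚ) else 0))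
      = ∑ x ∈ Wfin Δ, g (x lam) := rfl
  rw [hO, hW, hbody, hregroup, ← Finset.mul_sum]
  have hfac : ((Ofin Δ lam).card : ℚ) / ((Wfin Δ).card : ℚ) * (Stab.card : ℚ) = 1 := by
    rw [div_mul_eq_mul_div, div_eq_one_iff_eq hWne]
    exact_mod_cast hcard.symm
  rw [← mul_assoc, hfac, one_mul, LL]
  push_cast
  rfl


end MainLemmas


end RootSystemWithBase

variable {Δ}

open RootSystemWithBase in
/-- the explicit inverse of the character-to-orbit decomposition:
`E_lam = ∑_{μ ∈ P₊} M⁻¹_{lam,μ} χ_μ` with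
`M⁻¹_{lam,μ} = (|W lam|/|W|) ∑_{x,w ∈ W} (det w) δ(x lam + wρ, μ + ρ)`,
only finitely many of which are nonzero. -/
theorem orbit_sum_in_terms_of_characters (Δ : RootSystemWithBase V)
    (ε : (V ≃ₗ[ℝ] V) → ℤ)
    (hε : ∀ w ∈ Δ.Weyl, ((ε w : ℤ) : ℝ) = LinearMap.det (w : V →ₗ[ℝ] V))
    (lam : V) (hlam : Δ.IsDominant lam) :
    {μ : V | Δ.IsDominant μ ∧ Δ.Minv ε lam μ ≠ 0}.Finite ∧
    algebraMap (AddMonoidAlgebra ℤ V) (FR V) (Δ.Eorb lam) =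
      ∑ᶠ μ ∈ {μ : V | Δ.IsDominant μ}, (Δ.Minv ε lam μ : FR V) * Δ.ch ε μ := by
  classical
  have hρ : ∀ α ∈ Δ.S, 0 < ⟪Δ.rho, α⟫_ℝ := fun α hα => rho_inner_simple_pos (Δ := Δ) hα
  have hdom_nonneg : ∀ {μ : V}, Δ.IsDominant μ → ∀ α ∈ Δ.S, 0 ≤ ⟪μ, α⟫_ℝ := by
    intro μ hμ α hα
    have h := hμ.2 α hα
    have hc := inner_root_pos (Δ := Δ) (Δ.base_sub hα)
    by_contra hneg
    push_neg at hneg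
    have : 2 * ⟪μ, α⟫_ℝ / ⟪α, α⟫_ℝ < 0 := div_neg_of_neg_of_pos (by linarith) hc
    linarith
  have hstrict : ∀ {μ : V}, Δ.IsDominant μ → ∀ α ∈ Δ.S, 0 < ⟪μ + Δ.rho, α⟫_ℝ := by
    intro μ hμ α hα
    rw [inner_add_left]
    have := hdom_nonneg hμ α hα
    linarith [hρ α hα]
  set DD := AA Δ ε Δ.rho with hDD
  have hD1 : (DD).coeff Δ.rho = 1 := AA_coeff_diag hε hρ
  have hDne : DD ≠ 0 := fun h => by rw [h] at hD1; simp at hD1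
  have hAne : ∀ {μ : V}, Δ.IsDominant μ → AA Δ ε (μ + Δ.rho) ≠ 0 := by
    intro μ hμ h
    have h2 := AA_coeff_diag hε (hstrict hμ)
    rw [h] at h2; simp at h2
  set alg := algebraMap (AddMonoidAlgebra ℤ V) (FR V) with halg
  have halg_inj : Function.Injective alg := IsFractionRing.injective _ _
  have halgD : alg DD ≠ 0 := fun h => hDne (halg_inj (by rw [h, map_zero]))
  have hch : ∀ μ : V, Δ.ch ε μ = alg (AA Δ ε (μ + Δ.rho)) / alg DD := by
    intro μ
    rw [ch]
    congr 1
    · rw [← coe_Wfin, finsum_mem_coe_finset, AA, map_sum]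
      exact Finset.sum_congr rfl fun w _ => (map_zsmul alg _ _).symm
    · rw [← coe_Wfin, finsum_mem_coe_finset, hDD, AA, map_sum]
      exact Finset.sum_congr rfl fun w _ => (map_zsmul alg _ _).symm
  set bigT := ((Ofin Δ lam) ×ˢ (Wfin Δ)).image (fun p => p.1 + p.2 Δ.rho - Δ.rho)
    with hbigT
  have hsupp : ∀ μ : V, LL Δ ε lam (μ + Δ.rho) ≠ 0 → μ ∈ bigT := by
    intro μ h
    rw [LL] at h
    obtain ⟨φ, hφ, h2⟩ := Finset.exists_ne_zero_of_sum_ne_zero h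
    obtain ⟨w, hw, h3⟩ := Finset.exists_ne_zero_of_sum_ne_zero h2
    have hcond : φ + w Δ.rho = μ + Δ.rho := by
      by_contra hc
      rw [if_neg hc, mul_zero] at h3
      exact h3 rfl
    apply Finset.mem_image.mpr
    refine ⟨(φ, w), Finset.mem_product.mpr ⟨hφ, hw⟩, ?_⟩
    show φ + w Δ.rho - Δ.rho = μ
    rw [hcond, add_sub_cancel_right]
  set tfin := bigT.filter (fun μ => Δ.IsDominant μ ∧ LL Δ ε lam (μ + Δ.rho) ≠ 0)
    with htfin
  -- the grand identity
  have grand : (∑ φ ∈ Ofin Δ lam, expo φ) * DD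
      = ∑ μ ∈ tfin, (LL Δ ε lam (μ + Δ.rho)) • AA Δ ε (μ + Δ.rho) := by
    apply AddMonoidAlgebra.ext
    apply Finsupp.ext
    intro κ
    rw [ED_coeff]
    have hRc : (∑ μ ∈ tfin, (LL Δ ε lam (μ + Δ.rho)) • AA Δ ε (μ + Δ.rho)).coeff κ
        = ∑ μ ∈ tfin, (LL Δ ε lam (μ + Δ.rho)) *
            (∑ v ∈ Wfin Δ, ε v * (if v (μ + Δ.rho) = κ then 1 else 0)) := by
      rw [AddMonoidAlgebra.coeff_sum, Finset.sum_apply']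
      apply Finset.sum_congr rfl
      intro μ _
      rw [AddMonoidAlgebra.coeff_smul_apply, AA_coeff, smul_eq_mul]
    rw [hRc]
    by_cases hsing : ∃ β ∈ Δ.R, ⟪κ, β⟫_ℝ = 0
    · obtain ⟨β, hβ, h0⟩ := hsing
      rw [LL_singular hε hβ h0]
      symm
      apply Finset.sum_eq_zero
      intro μ _
      rw [sum_sign_ite_singular hε hβ h0, mul_zero]
    · push_neg at hsing
      obtain ⟨u, hu, hudom⟩ := exists_dominant_rep (Δ := Δ) κ
      have hustrict : ∀ α ∈ Δ.S, 0 < ⟪u κ, α⟫_ℝ := by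
        intro α hα
        rcases lt_or_eq_of_le (hudom α hα) with h | h
        · exact h
        · exfalso
          have hαR : u⁻¹ α ∈ Δ.R := weyl_maps_R (inv_mem hu) (Δ.base_sub hα)
          have he : ⟪u κ, α⟫_ℝ = ⟪κ, u⁻¹ α⟫_ℝ := by
            conv_lhs => rw [show α = u (u⁻¹ α) from (inv_apply_eq u α).symm]
            rw [weyl_inner hu]
          exact hsing (u⁻¹ α) hαR (by rw [← he, ← h])
      set μ₀ := u κ - Δ.rho with hμ₀
      have hμ₀ρ : μ₀ + Δ.rho = u κ := by rw [hμ₀, sub_add_cancel]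
      have hLκ : LL Δ ε lam κ = ε u * LL Δ ε lam (μ₀ + Δ.rho) := by
        rw [hμ₀ρ, LL_equivariant hε hu, ← mul_assoc, eps_mul_self ε hε hu, one_mul]
      have huniq : ∀ μ ∈ tfin, ∀ v ∈ Wfin Δ, v (μ + Δ.rho) = κ → μ = μ₀ ∧ v = u⁻¹ := by
        intro μ hμt v hv hvκ
        have hμdom : Δ.IsDominant μ := ((Finset.mem_filter.mp hμt).2).1
        have hvW := mem_Wfin.mp hv
        have huv : u * v = 1 := by
          apply strict_dom_unique (mul_mem hu hvW) (hstrict hμdom)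
          intro α hα
          rw [mul_apply, hvκ]
          exact hustrict α hα
        have hveq : v = u⁻¹ := eq_inv_of_mul_eq_one_right huv
        refine ⟨?_, hveq⟩
        have h2 := congrArg u hvκ
        rw [hveq] at h2
        rw [inv_apply_eq] at h2
        rw [hμ₀, ← h2, add_sub_cancel_right]
      by_cases hmem : μ₀ ∈ tfin
      · have hterm0 : ∀ μ ∈ tfin, μ ≠ μ₀ →
            (LL Δ ε lam (μ + Δ.rho)) *
              (∑ v ∈ Wfin Δ, ε v * (if v (μ + Δ.rho) = κ then 1 else 0)) = 0 := by
          intro μ hμt hne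
          apply mul_eq_zero_of_right
          apply Finset.sum_eq_zero
          intro v hv
          by_cases hc : v (μ + Δ.rho) = κ
          · exact absurd (huniq μ hμt v hv hc).1 hne
          · rw [if_neg hc, mul_zero]
        rw [Finset.sum_eq_single μ₀ hterm0 (fun h => absurd hmem h)]
        have hval : u⁻¹ (μ₀ + Δ.rho) = κ := by
          rw [hμ₀ρ]
          exact inv_apply_eq' u κ
        have hsum2 : (∑ v ∈ Wfin Δ, ε v * (if v (μ₀ + Δ.rho) = κ then 1 else 0)) = ε u := by
          rw [Finset.sum_eq_single u⁻¹]
          · rw [if_pos hval, mul_one, eps_inv ε hε hu]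
          · intro v hv hne
            by_cases hc : v (μ₀ + Δ.rho) = κ
            · exact absurd (huniq μ₀ hmem v hv hc).2 hne
            · rw [if_neg hc, mul_zero]
          · intro h
            exact absurd (mem_Wfin.mpr (inv_mem hu)) h
        rw [hsum2, hLκ]
        ring
      · have hL0 : LL Δ ε lam (μ₀ + Δ.rho) = 0 := by
          by_contra hLne
          apply hmem
          -- extract a witness pair to see that μ₀ is a dominant weight
          have hw3 : Δ.IsWeight (μ₀ + Δ.rho) := by
            have h := hLne
            rw [LL] at h
            obtain ⟨φ, hφ, h2⟩ := Finset.exists_ne_zero_of_sum_ne_zero h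
            obtain ⟨w, hw, h3⟩ := Finset.exists_ne_zero_of_sum_ne_zero h2
            have hcond : φ + w Δ.rho = μ₀ + Δ.rho := by
              by_contra hc
              rw [if_neg hc, mul_zero] at h3
              exact h3 rfl
            obtain ⟨x, hx, rfl⟩ := mem_Ofin.mp hφ
            rw [← hcond]
            exact weight_add (weight_weyl hlam.1 hx)
              (weight_weyl (rho_weight (Δ := Δ)) (mem_Wfin.mp hw))
          have hμ₀dom : Δ.IsDominant μ₀ := by
            constructor
            · have := weight_sub hw3 (rho_weight (Δ := Δ))
              rwa [add_sub_cancel_right] at this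
            · intro α hα
              have hαR : α ∈ Δ.R := Δ.base_sub hα
              obtain ⟨n, hn⟩ := hw3 α hαR
              have hcpos := inner_root_pos (Δ := Δ) hαR
              have hpos : (0:ℝ) < (n:ℝ) := by
                rw [← hn]
                apply div_pos _ hcpos
                have : 0 < ⟪μ₀ + Δ.rho, α⟫_ℝ := by
                  rw [hμ₀ρ]
                  exact hustrict α hα
                linarith
              have hn1 : (1:ℝ) ≤ (n:ℝ) := by
                have : 0 < n := by exact_mod_cast hpos
                exact_mod_cast this
              have hsplit : 2 * ⟪μ₀, α⟫_ℝ / ⟪α, α⟫_ℝ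
                  = 2 * ⟪μ₀ + Δ.rho, α⟫_ℝ / ⟪α, α⟫_ℝ - 2 * ⟪Δ.rho, α⟫_ℝ / ⟪α, α⟫_ℝ := by
                rw [inner_add_left]
                ring
              rw [hsplit, hn, pair_rho_simple (Δ := Δ) hα]
              linarith
          rw [htfin, Finset.mem_filter]
          exact ⟨hsupp μ₀ hLne, hμ₀dom, hLne⟩
        rw [hLκ, hL0, mul_zero]
        symm
        apply Finset.sum_eq_zero
        intro μ hμt
        apply mul_eq_zero_of_right
        apply Finset.sum_eq_zero
        intro v hv
        by_cases hc : v (μ + Δ.rho) = κ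
        · exact absurd ((huniq μ hμt v hv hc).1 ▸ hμt) hmem
        · rw [if_neg hc, mul_zero]
  -- the finiteness statement
  have hLL_of_Minv : ∀ μ : V, Δ.Minv ε lam μ ≠ 0 → LL Δ ε lam (μ + Δ.rho) ≠ 0 := by
    intro μ hne hLL
    apply hne
    rw [Minv_eq hε lam μ, hLL]
    norm_num
  have hfinsub : {μ : V | Δ.IsDominant μ ∧ Δ.Minv ε lam μ ≠ 0} ⊆ (↑bigT : Set V) := by
    rintro μ ⟨hdom, hne⟩
    exact hsupp μ (hLL_of_Minv μ hne)
  refine ⟨Set.Finite.subset (Finset.finite_toSet bigT) hfinsub, ?_⟩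
  -- convert the finsum to a finite sum over tfin
  set f : V → FR V := fun μ => (Δ.Minv ε lam μ : FR V) * Δ.ch ε μ with hf
  have hconv : ∑ᶠ μ ∈ {μ : V | Δ.IsDominant μ}, f μ = ∑ μ ∈ tfin, f μ := by
    apply finsum_mem_eq_sum_of_inter_support_eq
    apply Set.ext
    intro μ
    simp only [Set.mem_inter_iff, Set.mem_setOf_eq, Function.mem_support, Finset.mem_coe]
    constructor
    · rintro ⟨hdom, hne⟩
      have hMne : Δ.Minv ε lam μ ≠ 0 := by
        intro h
        apply hne
        rw [hf]
        simp [h]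
      have hLne := hLL_of_Minv μ hMne
      exact ⟨Finset.mem_filter.mpr ⟨hsupp μ hLne, hdom, hLne⟩, hne⟩
    · rintro ⟨htf, hne⟩
      exact ⟨(Finset.mem_filter.mp htf).2.1, hne⟩
  rw [hconv]
  -- rewrite each term
  have hterm : ∀ μ ∈ tfin, f μ
      = alg ((LL Δ ε lam (μ + Δ.rho)) • AA Δ ε (μ + Δ.rho)) * (alg DD)⁻¹ := by
    intro μ hμt
    rw [hf]
    simp only
    rw [Minv_eq hε lam μ, hch μ, Rat.cast_intCast, map_zsmul, zsmul_eq_mul,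
      div_eq_mul_inv, mul_assoc]
  rw [Finset.sum_congr rfl hterm, ← Finset.sum_mul, ← map_sum, ← grand]
  rw [Eorb_eq, map_mul]
  rw [mul_inv_cancel_right₀ halgD]
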